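/- The maximal order of an abelian subgroup of S_n is 3^{n/3} for n divisible by 3; more generally it equals f(n) where f(n) = 3^k if n = 3k, f(n) = 4·3^{k−1} if n = 3k+1 (k ≥ 1), and f(n) = 2·3^k if n = 3k+2. -/

import Mathlib

def bmF (n : ℕ) : ℕ :=
  if n % 3 = 0 then 3 ^ (n / 3)
  else if n % 3 = 1 then (if n = 1 then 1 else 4 * 3 ^ (n / 3 - 1))
  else 2 * 3 ^ (n / 3)

lemma bmF_add_three (m : ℕ) (hm : m ≠ 1) : bmF (m + 3) = 3 * bmF m := by
  have h3 : (m + 3) % 3 = m % 3 := by omega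
  have h4 : (m + 3) / 3 = m / 3 + 1 := by omega
  unfold bmF
  rw [h3, h4]
  rcases (by omega : m % 3 = 0 ∨ m % 3 = 1 ∨ m % 3 = 2) with h | h | h <;>
    simp only [h] <;> norm_num
  · ring
  · have h1 : m ≠ 0 := by omega
    have h2 : m + 3 ≠ 1 := by omega
    have h5 : 1 ≤ m / 3 := by omega
    simp only [if_neg h2, if_neg hm]
    obtain ⟨k, hk⟩ : ∃ k, m / 3 = k + 1 := ⟨m / 3 - 1, by omega⟩
    rw [hk]
    simp only [Nat.add_sub_cancel, pow_succ]
    ring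
  · ring

lemma le_bmF (m : ℕ) : m ≤ bmF m := by
  induction m using Nat.strong_induction_on with
  | _ m ih =>
    match m, ih with
    | 0, _ => decide
    | 1, _ => decide
    | 2, _ => decide
    | 3, _ => decide
    | 4, _ => decide
    | (m + 5), ih =>
      rw [show m + 5 = (m + 2) + 3 by ring, bmF_add_three _ (by omega)]
      have := ih (m + 2) (by omega)
      omega

lemma bmF_mul_le : ∀ n a b : ℕ, a + b = n → bmF a * bmF b ≤ bmF n := by
  intro n
  induction n using Nat.strong_induction_on with
  | _ n ih =>
    intro a b hab
    rcases Nat.lt_or_ge a 5 with ha | ha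
    · rcases Nat.lt_or_ge b 5 with hb | hb
      · subst hab
        interval_cases a <;> interval_cases b <;> decide
      · obtain ⟨b', rfl⟩ : ∃ b', b = b' + 3 := ⟨b - 3, by omega⟩
        rw [bmF_add_three _ (by omega), show a + (b' + 3) = (a + b') + 3 by ring] at *
        subst hab
        rw [bmF_add_three _ (by omega)]
        have := ih (a + b') (by omega) a b' rfl
        calc bmF a * (3 * bmF b') = 3 * (bmF a * bmF b') := by ring
        _ ≤ 3 * bmF (a + b') := by omega
    · obtain ⟨a', rfl⟩ : ∃ a', a = a' + 3 := ⟨a - 3, by omega⟩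
      rw [bmF_add_three _ (by omega)] at *
      subst hab
      rw [show a' + 3 + b = (a' + b) + 3 by ring, bmF_add_three _ (by omega)]
      have := ih (a' + b) (by omega) a' b rfl
      calc 3 * bmF a' * bmF b = 3 * (bmF a' * bmF b) := by ring
      _ ≤ 3 * bmF (a' + b) := by omega

lemma prod_le_bmF {ι : Type*} (s : Finset ι) (m : ι → ℕ) :
    ∏ i ∈ s, m i ≤ bmF (∑ i ∈ s, m i) := by
  classical
  induction s using Finset.induction_on with
  | empty => simp [bmF]
  | @insert a s h ih =>
    rw [Finset.prod_insert h, Finset.sum_insert h]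
    calc m a * ∏ i ∈ s, m i ≤ bmF (m a) * bmF (∑ i ∈ s, m i) :=
          Nat.mul_le_mul (le_bmF _) ih
    _ ≤ bmF (m a + ∑ i ∈ s, m i) := bmF_mul_le _ _ _ rfl
open Equiv

def transPerm {ι : Type} (m : ι → ℕ) (v : ∀ i, ZMod (m i)) :
    Equiv.Perm (Σ i, ZMod (m i)) where
  toFun p := ⟨p.1, p.2 + v p.1⟩
  invFun p := ⟨p.1, p.2 - v p.1⟩
  left_inv p := by simp
  right_inv p := by simp

def transHom {ι : Type} (m : ι → ℕ) :
    Multiplicative (∀ i, ZMod (m i)) →* Equiv.Perm (Σ i, ZMod (m i)) where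
  toFun v := transPerm m v.toAdd
  map_one' := by
    ext p
    · rfl
    · simp [transPerm]
  map_mul' v w := by
    ext p
    · rfl
    · simp only [transPerm, Equiv.Perm.mul_apply, Equiv.coe_fn_mk, toAdd_mul, Pi.add_apply]
      exact heq_of_eq (by ring)

lemma transHom_injective {ι : Type} (m : ι → ℕ) : Function.Injective (transHom m) := by
  intro v w h
  have := fun i => congrArg (fun σ : Equiv.Perm (Σ i, ZMod (m i)) => σ ⟨i, 0⟩) h
  simp only [transHom, MonoidHom.coe_mk, OneHom.coe_mk, transPerm, Equiv.coe_fn_mk,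
    zero_add, Sigma.mk.inj_iff, heq_eq_eq, true_and] at this
  exact Multiplicative.toAdd.injective (funext this)

lemma exists_abelian_subgroup {ι : Type} [Fintype ι] (m : ι → ℕ) (hm : ∀ i, 0 < m i)
    (n : ℕ) (hn : ∑ i, m i = n) :
    ∃ H : Subgroup (Equiv.Perm (Fin n)),
      (∀ a b : H, a * b = b * a) ∧ Nat.card H = ∏ i, m i := by
  haveI : ∀ i, NeZero (m i) := fun i => ⟨(hm i).ne'⟩
  have hcard : Fintype.card (Σ i, ZMod (m i)) = n := by
    simp only [Fintype.card_sigma, ZMod.card]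
    exact hn
  let e : (Σ i, ZMod (m i)) ≃ Fin n := Fintype.equivFinOfCardEq hcard
  let c : Equiv.Perm (Σ i, ZMod (m i)) →* Equiv.Perm (Fin n) :=
    { toFun := fun σ => e.permCongr σ
      map_one' := by ext x; simp
      map_mul' := fun σ τ => by ext x; simp }
  have hc : Function.Injective c := fun σ τ h => Equiv.ext fun x => by
    simpa [c] using congrArg (fun ρ : Equiv.Perm (Fin n) => e.symm (ρ (e x))) h
  let ψ := c.comp (transHom m)
  have hψ : Function.Injective ψ := hc.comp (transHom_injective m)
  refine ⟨ψ.range, ?_, ?_⟩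
  · rintro ⟨a, x, rfl⟩ ⟨b, y, rfl⟩
    ext
    simp only [Subgroup.coe_mul, ← map_mul]
    rw [mul_comm]
  · have h1 : Nat.card ψ.range = Nat.card (Multiplicative (∀ i, ZMod (m i))) := by
      rw [← Nat.card_range_of_injective hψ]
      rfl
    rw [h1, Nat.card_congr Multiplicative.toAdd, Nat.card_pi]
    simp [Nat.card_zmod]
open MulAction

lemma abelian_card_le (n : ℕ) (H : Subgroup (Equiv.Perm (Fin n)))
    (hH : ∀ a b : H, a * b = b * a) :
    ∃ (ι : Type) (_ : Fintype ι) (m : ι → ℕ),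
      (∀ i, 0 < m i) ∧ ∑ i, m i = n ∧ Nat.card H ≤ ∏ i, m i := by
  classical
  letI : Fintype (orbitRel.Quotient H (Fin n)) := Fintype.ofFinite _
  refine ⟨orbitRel.Quotient H (Fin n), inferInstance,
    fun ω => Nat.card ω.orbit, fun ω => ?_, ?_, ?_⟩
  · haveI : Nonempty ω.orbit := (orbitRel.Quotient.nonempty_orbit ω).to_subtype
    exact Nat.card_pos
  · have e := (selfEquivSigmaOrbits' H (Fin n))
    have h2 := Fintype.card_congr e
    rw [Fintype.card_fin, Fintype.card_sigma] at h2
    simp only [Nat.card_eq_fintype_card]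
    exact h2.symm
  · -- injective map H → ∀ ω, ω.orbit
    set f : H → ∀ ω : orbitRel.Quotient H (Fin n), ω.orbit := fun g ω =>
      ⟨g • ω.out, by
        rw [orbitRel.Quotient.orbit_eq_orbit_out ω Quotient.out_eq']
        exact mem_orbit _ _⟩
    have hf : Function.Injective f := by
      intro g g' h
      have key : ∀ a : Fin n, g • a = g' • a := by
        intro a
        set ω : orbitRel.Quotient H (Fin n) := Quotient.mk'' a
        have ha : a ∈ orbit H ω.out := by
          rw [← orbitRel.Quotient.orbit_eq_orbit_out ω Quotient.out_eq']
          exact orbitRel.Quotient.mem_orbit.mpr rfl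
        obtain ⟨k, hk'⟩ := ha
        replace hk : k • (ω.out : Fin n) = a := hk'
        have hω : g • (ω.out : Fin n) = g' • ω.out := congrArg Subtype.val (congrFun h ω)
        calc g • a = g • k • ω.out := by rw [hk]
        _ = (g * k) • ω.out := (mul_smul _ _ _).symm
        _ = (k * g) • ω.out := by rw [hH g k]
        _ = k • g • ω.out := mul_smul _ _ _
        _ = k • g' • ω.out := by rw [hω]
        _ = (k * g') • ω.out := (mul_smul _ _ _).symm
        _ = (g' * k) • ω.out := by rw [hH g' k]
        _ = g' • k • ω.out := mul_smul _ _ _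
        _ = g' • a := by rw [hk]
      refine Subtype.ext (Equiv.ext fun x => ?_)
      simpa [Subgroup.smul_def, Equiv.Perm.smul_def] using key x
    calc Nat.card H ≤ Nat.card (∀ ω : orbitRel.Quotient H (Fin n), ω.orbit) :=
          Nat.card_le_card_of_injective f hf
    _ = ∏ ω : orbitRel.Quotient H (Fin n), Nat.card ω.orbit := Nat.card_pi

/-- Bercov–Moser: the maximal order of an abelian subgroup of `S_n` is `3^k` if `n = 3k`,
`4·3^{k−1}` if `n = 3k+1` with `k ≥ 1`, and `2·3^k` if `n = 3k+2` (and `1` for `n = 1`). -/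
theorem max_order_abelian_subgroup_symmetric_group (n : ℕ) (hn : 1 ≤ n) :
    IsGreatest
      {m : ℕ | ∃ H : Subgroup (Equiv.Perm (Fin n)),
        (∀ a b : H, a * b = b * a) ∧ Nat.card H = m}
      (if n % 3 = 0 then 3 ^ (n / 3)
       else if n % 3 = 1 then (if n = 1 then 1 else 4 * 3 ^ (n / 3 - 1))
       else 2 * 3 ^ (n / 3)) := by
  show IsGreatest _ (bmF n)
  constructor
  · -- membership
    show ∃ H : Subgroup (Equiv.Perm (Fin n)),
        (∀ a b : H, a * b = b * a) ∧ Nat.card H = bmF n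
    rcases (by omega : n % 3 = 0 ∨ (n % 3 = 1 ∧ n = 1) ∨ (n % 3 = 1 ∧ 4 ≤ n) ∨ n % 3 = 2)
      with h | ⟨h, h1⟩ | ⟨h, h4⟩ | h
    · obtain ⟨H, hc, hcard⟩ := exists_abelian_subgroup (fun _ : Fin (n / 3) => 3)
        (fun _ => by norm_num) n (by simp [Finset.sum_const]; omega)
      refine ⟨H, hc, ?_⟩
      rw [hcard, Finset.prod_const]
      simp only [bmF, if_pos h, Finset.card_univ, Fintype.card_fin]
    · obtain ⟨H, hc, hcard⟩ := exists_abelian_subgroup (fun _ : Fin 1 => 1)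
        (fun _ => by norm_num) n (by simp [h1])
      refine ⟨H, hc, ?_⟩
      rw [hcard]
      simp [bmF, h1]
    · obtain ⟨j, hj⟩ : ∃ j, n / 3 = j + 1 := ⟨n / 3 - 1, by omega⟩
      obtain ⟨H, hc, hcard⟩ := exists_abelian_subgroup
        (Fin.cons 4 (fun _ => 3) : Fin (j + 1) → ℕ)
        (fun i => by refine Fin.cases ?_ ?_ i <;> norm_num) n
        (by rw [Fin.sum_cons]; simp [Finset.sum_const]; omega)
      refine ⟨H, hc, ?_⟩
      rw [hcard, Fin.prod_cons, Finset.prod_const]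
      simp only [bmF, if_neg (by omega : ¬ n % 3 = 0), if_pos h,
        if_neg (by omega : ¬ n = 1), Finset.card_univ, Fintype.card_fin]
      rw [show n / 3 - 1 = j by omega]
    · obtain ⟨H, hc, hcard⟩ := exists_abelian_subgroup
        (Fin.cons 2 (fun _ => 3) : Fin (n / 3 + 1) → ℕ)
        (fun i => by refine Fin.cases ?_ ?_ i <;> norm_num) n
        (by rw [Fin.sum_cons]; simp [Finset.sum_const]; omega)
      refine ⟨H, hc, ?_⟩
      rw [hcard, Fin.prod_cons, Finset.prod_const]
      simp only [bmF, if_neg (by omega : ¬ n % 3 = 0), if_neg (by omega : ¬ n % 3 = 1),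
        Finset.card_univ, Fintype.card_fin]
  · -- upper bound
    rintro m ⟨H, hH, rfl⟩
    obtain ⟨ι, hι, mm, hpos, hsum, hle⟩ := abelian_card_le n H hH
    calc Nat.card H ≤ ∏ i, mm i := hle
    _ ≤ bmF (∑ i, mm i) := prod_le_bmF Finset.univ mm
    _ = bmF n := by rw [hsum]
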